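/- The minimum cardinality of a generating subset of the multiplicative semigroup A^+(B_2) is 4; explicitly, {(1,2;σ), (2,1;id), ξ_{(1,1)}, ((1,1)→(1,1))}, where σ is the transposition (1 2), is a minimum generating set. -/

import Mathlib

def Bn (n : ℕ) : Type := Option (Fin n × Fin n)

def Bn.mul {n : ℕ} : Bn n → Bn n → Bn n
  | some (i, j), some (k, l) => if j = k then some (i, l) else none
  | _, _ => none

instance (n : ℕ) : Mul (Bn n) := ⟨Bn.mul⟩

instance (n : ℕ) : Semigroup (Bn n) where
  mul_assoc a b c := by
    show Bn.mul (Bn.mul a b) c = Bn.mul a (Bn.mul b c)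
    have e : ∀ i j k l : Fin n, Bn.mul (some (i, j)) (some (k, l)) =
        if j = k then some (i, l) else none := fun _ _ _ _ => rfl
    rcases a with _ | ⟨i, j⟩ <;> rcases b with _ | ⟨k, l⟩ <;> rcases c with _ | ⟨p, q⟩ <;>
      try rfl
    · rw [e i j k l]
      split_ifs <;> rfl
    · rw [e i j k l, e k l p q]
      by_cases h1 : j = k <;> by_cases h2 : l = p
      · rw [if_pos h1, if_pos h2, e, e, if_pos h2, if_pos h1]
      · rw [if_pos h1, if_neg h2, e, if_neg h2]; rfl
      · rw [if_neg h1, if_pos h2, e, if_neg h1]; rfl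
      · rw [if_neg h1, if_neg h2]; rfl

/-- Maps on `Bn n`, composed left-to-right: `x (f * g) = (x f) g`. -/
def MapBn (n : ℕ) : Type := Bn n → Bn n

instance (n : ℕ) : Monoid (MapBn n) where
  mul f g := fun x => g (f x)
  one := fun x => x
  mul_assoc _ _ _ := rfl
  one_mul _ := rfl
  mul_one _ := rfl

/-- The constant map `ξ_c`. -/
def constMap (n : ℕ) (c : Bn n) : MapBn n := fun _ => c

/-- The `n`-support map `(p, q; σ)`, sending `(i, p) ↦ (iσ, q)` and all else to `θ`. -/
def nSuppMap (n : ℕ) (p q : Fin n) (σ : Equiv.Perm (Fin n)) : MapBn n :=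
  fun x =>
    match x with
    | some (i, j) => if j = p then some (σ i, q) else none
    | none => none

instance (n : ℕ) : DecidableEq (Bn n) :=
  inferInstanceAs (DecidableEq (Option (Fin n × Fin n)))

/-- The singleton-support map `((k,l) → (p,q))`. -/
def sglMap (n : ℕ) (k l p q : Fin n) : MapBn n :=
  fun x => @ite _ (x = some (k, l)) (instDecidableEqBn n x (some (k, l))) (some (p, q)) none

/-- The multiplicative semigroup reduct `A⁺(Bₙ)`, as a set of maps on `Bn n`. -/
def APlus (n : ℕ) : Set (MapBn n) :=
  {f | (∃ c, f = constMap n c) ∨ (∃ p q σ, f = nSuppMap n p q σ) ∨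
       (∃ k l p q, f = sglMap n k l p q)}

/-- Independence of a subset of a semigroup. -/
def IndependentIn {S : Type*} [Semigroup S] (U : Set S) : Prop :=
  ∀ a ∈ U, a ∉ Subsemigroup.closure (U \ {a})

instance : Fintype (Bn 2) := inferInstanceAs (Fintype (Option (Fin 2 × Fin 2)))
instance : DecidableEq (MapBn 2) := inferInstanceAs (DecidableEq (Bn 2 → Bn 2))
instance : Finite (MapBn 2) := inferInstanceAs (Finite (Bn 2 → Bn 2))

def pb (b : Bool) : Equiv.Perm (Fin 2) := if b then Equiv.swap 0 1 else 1

lemma perm2 : ∀ σ : Equiv.Perm (Fin 2), σ = pb false ∨ σ = pb true := by decide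

inductive Form where
  | const : Bn 2 → Form
  | ns : Fin 2 → Fin 2 → Bool → Form
  | sg : Fin 2 → Fin 2 → Fin 2 → Fin 2 → Form
  deriving DecidableEq, Fintype

def Form.eval : Form → MapBn 2
  | .const c => constMap 2 c
  | .ns p q b => nSuppMap 2 p q (pb b)
  | .sg k l p q => sglMap 2 k l p q

def Form.mul : Form → Form → Form
  | .const c, G => .const (G.eval c)
  | _, .const c => .const c
  | .ns p q b, .ns p' q' b' => if q = p' then .ns p q' (xor b b') else .const none
  | .ns p q b, .sg k l p' q' => if q = l then .sg (pb b k) p p' q' else .const none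
  | .sg k l p q, .ns p'' q'' b => if q = p'' then .sg k l (pb b p) q'' else .const none
  | .sg k l p q, .sg k' l' p' q' => if p = k' ∧ q = l' then .sg k l p' q' else .const none

lemma eval_mul : ∀ F G : Form, F.eval * G.eval = (F.mul G).eval := by decide

lemma eval_inj : ∀ F G : Form, F.eval = G.eval → F = G := by decide

lemma range_eval : APlus 2 = Set.range Form.eval := by
  ext f
  simp only [APlus, Set.mem_setOf_eq, Set.mem_range]
  constructor
  · rintro (⟨c, rfl⟩ | ⟨p, q, σ, rfl⟩ | ⟨k, l, p, q, rfl⟩)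
    · exact ⟨.const c, rfl⟩
    · rcases perm2 σ with rfl | rfl
      · exact ⟨.ns p q false, rfl⟩
      · exact ⟨.ns p q true, rfl⟩
    · exact ⟨.sg k l p q, rfl⟩
  · rintro ⟨F, rfl⟩
    cases F with
    | const c => exact Or.inl ⟨c, rfl⟩
    | ns p q b => exact Or.inr (Or.inl ⟨p, q, pb b, rfl⟩)
    | sg k l p q => exact Or.inr (Or.inr ⟨k, l, p, q, rfl⟩)

def APlusSub : Subsemigroup (MapBn 2) where
  carrier := APlus 2
  mul_mem' := by
    rw [range_eval]
    rintro a b ⟨F, rfl⟩ ⟨G, rfl⟩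
    exact ⟨F.mul G, (eval_mul F G).symm⟩

def r1 : Form → Bool := fun F => match F with | .const (some _) => true | _ => false
def r2 : Form → Bool := fun F => match F with | .sg _ _ _ _ => true | _ => false
def r3 : Form → Bool := fun F => match F with | .ns p _ _ => decide (p = 0) | _ => false
def r4 : Form → Bool := fun F => match F with | .ns p _ _ => decide (p = 1) | _ => false

abbrev role1 (f : MapBn 2) : Prop := ∃ x y : Fin 2, f = constMap 2 (some (x, y))
abbrev role2 (f : MapBn 2) : Prop := ∃ k l p q : Fin 2, f = sglMap 2 k l p q
abbrev role3 (f : MapBn 2) : Prop := ∃ (q : Fin 2) (σ : Equiv.Perm (Fin 2)), f = nSuppMap 2 0 q σ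
abbrev role4 (f : MapBn 2) : Prop := ∃ (q : Fin 2) (σ : Equiv.Perm (Fin 2)), f = nSuppMap 2 1 q σ

lemma bridge1 : ∀ F : Form, role1 F.eval ↔ r1 F = true := by decide
lemma bridge2 : ∀ F : Form, role2 F.eval ↔ r2 F = true := by decide
lemma bridge3' : ∀ F : Form, (∃ (q : Fin 2) (b : Bool), F.eval = nSuppMap 2 0 q (pb b)) ↔ r3 F = true := by decide
lemma bridge4' : ∀ F : Form, (∃ (q : Fin 2) (b : Bool), F.eval = nSuppMap 2 1 q (pb b)) ↔ r4 F = true := by decide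

lemma bridge3 : ∀ F : Form, role3 F.eval ↔ r3 F = true := by
  intro F
  refine Iff.trans ?_ (bridge3' F)
  constructor
  · rintro ⟨q, σ, h⟩
    rcases perm2 σ with rfl | rfl
    exacts [⟨q, false, h⟩, ⟨q, true, h⟩]
  · rintro ⟨q, b, h⟩; exact ⟨q, pb b, h⟩

lemma bridge4 : ∀ F : Form, role4 F.eval ↔ r4 F = true := by
  intro F
  refine Iff.trans ?_ (bridge4' F)
  constructor
  · rintro ⟨q, σ, h⟩
    rcases perm2 σ with rfl | rfl
    exacts [⟨q, false, h⟩, ⟨q, true, h⟩]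
  · rintro ⟨q, b, h⟩; exact ⟨q, pb b, h⟩

lemma mulrole1 : ∀ F G : Form, r1 (F.mul G) = true → r1 F = true ∨ r1 G = true := by decide
lemma mulrole2 : ∀ F G : Form, r2 (F.mul G) = true → r2 F = true ∨ r2 G = true := by decide
lemma mulrole3 : ∀ F G : Form, r3 (F.mul G) = true → r3 F = true ∨ r3 G = true := by decide
lemma mulrole4 : ∀ F G : Form, r4 (F.mul G) = true → r4 F = true ∨ r4 G = true := by decide

lemma exists_role {U : Set (MapBn 2)} (hU : U ⊆ APlus 2)
    (hcl : (Subsemigroup.closure U : Set (MapBn 2)) = APlus 2)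
    (R : MapBn 2 → Prop) (r : Form → Bool)
    (hb : ∀ F : Form, R F.eval ↔ r F = true)
    (hm : ∀ F G : Form, r (F.mul G) = true → r F = true ∨ r G = true)
    {w : MapBn 2} (hw : w ∈ APlus 2) (hRw : R w) :
    ∃ u ∈ U, R u := by
  by_contra hcon
  push_neg at hcon
  set S : Subsemigroup (MapBn 2) :=
    { carrier := {f | f ∈ APlus 2 ∧ ¬ R f}
      mul_mem' := by
        rintro a b ⟨ha1, ha2⟩ ⟨hb1, hb2⟩
        rw [range_eval] at ha1 hb1
        obtain ⟨F, rfl⟩ := ha1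
        obtain ⟨G, rfl⟩ := hb1
        refine ⟨?_, ?_⟩
        · rw [range_eval]
          exact ⟨F.mul G, (eval_mul F G).symm⟩
        · rw [eval_mul, hb]
          intro h
          rcases hm F G h with h' | h'
          · exact ha2 ((hb F).mpr h')
          · exact hb2 ((hb G).mpr h') } with hS
  have hle : Subsemigroup.closure U ≤ S :=
    Subsemigroup.closure_le.mpr (fun u hu => ⟨hU hu, hcon u hu⟩)
  have hw' : w ∈ (Subsemigroup.closure U : Set (MapBn 2)) := by rw [hcl]; exact hw
  exact (hle hw').2 hRw

lemma lower {U : Set (MapBn 2)} (hU : U ⊆ APlus 2)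
    (hcl : (Subsemigroup.closure U : Set (MapBn 2)) = APlus 2) : 4 ≤ U.ncard := by
  obtain ⟨u1, hu1, hR1⟩ := exists_role hU hcl role1 r1 bridge1 mulrole1
    (show constMap 2 (some (0,0)) ∈ APlus 2 from Or.inl ⟨_, rfl⟩) ⟨0, 0, rfl⟩
  obtain ⟨u2, hu2, hR2⟩ := exists_role hU hcl role2 r2 bridge2 mulrole2
    (show sglMap 2 0 0 0 0 ∈ APlus 2 from Or.inr (Or.inr ⟨0, 0, 0, 0, rfl⟩)) ⟨0, 0, 0, 0, rfl⟩
  obtain ⟨u3, hu3, hR3⟩ := exists_role hU hcl role3 r3 bridge3 mulrole3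
    (show nSuppMap 2 0 1 (pb true) ∈ APlus 2 from Or.inr (Or.inl ⟨0, 1, pb true, rfl⟩)) ⟨1, pb true, rfl⟩
  obtain ⟨u4, hu4, hR4⟩ := exists_role hU hcl role4 r4 bridge4 mulrole4
    (show nSuppMap 2 1 0 (pb false) ∈ APlus 2 from Or.inr (Or.inl ⟨1, 0, pb false, rfl⟩)) ⟨0, pb false, rfl⟩
  -- express each as a form
  have hform : ∀ u ∈ U, ∃ F : Form, F.eval = u := by
    intro u hu
    have := hU hu
    rwa [range_eval] at this
  obtain ⟨F1, hF1⟩ := hform u1 hu1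
  obtain ⟨F2, hF2⟩ := hform u2 hu2
  obtain ⟨F3, hF3⟩ := hform u3 hu3
  obtain ⟨F4, hF4⟩ := hform u4 hu4
  have hr1 : r1 F1 = true := (bridge1 F1).mp (hF1 ▸ hR1)
  have hr2 : r2 F2 = true := (bridge2 F2).mp (hF2 ▸ hR2)
  have hr3 : r3 F3 = true := (bridge3 F3).mp (hF3 ▸ hR3)
  have hr4 : r4 F4 = true := (bridge4 F4).mp (hF4 ▸ hR4)
  have excl : ∀ F : Form, ¬(r1 F = true ∧ r2 F = true) ∧ ¬(r1 F = true ∧ r3 F = true) ∧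
      ¬(r1 F = true ∧ r4 F = true) ∧ ¬(r2 F = true ∧ r3 F = true) ∧
      ¬(r2 F = true ∧ r4 F = true) ∧ ¬(r3 F = true ∧ r4 F = true) := by decide
  have key : ∀ {a b : MapBn 2} {Fa Fb : Form}, Fa.eval = a → Fb.eval = b → a = b → Fa = Fb := by
    rintro a b Fa Fb rfl rfl h
    exact eval_inj _ _ h
  have ne12 : u1 ≠ u2 := fun h => (excl F1).1 ⟨hr1, by rw [key hF1 hF2 h]; exact hr2⟩
  have ne13 : u1 ≠ u3 := fun h => (excl F1).2.1 ⟨hr1, by rw [key hF1 hF3 h]; exact hr3⟩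
  have ne14 : u1 ≠ u4 := fun h => (excl F1).2.2.1 ⟨hr1, by rw [key hF1 hF4 h]; exact hr4⟩
  have ne23 : u2 ≠ u3 := fun h => (excl F2).2.2.2.1 ⟨hr2, by rw [key hF2 hF3 h]; exact hr3⟩
  have ne24 : u2 ≠ u4 := fun h => (excl F2).2.2.2.2.1 ⟨hr2, by rw [key hF2 hF4 h]; exact hr4⟩
  have ne34 : u3 ≠ u4 := fun h => (excl F3).2.2.2.2.2 ⟨hr3, by rw [key hF3 hF4 h]; exact hr4⟩
  have hsub : ({u1, u2, u3, u4} : Set (MapBn 2)) ⊆ U := by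
    rw [Set.insert_subset_iff, Set.insert_subset_iff, Set.insert_subset_iff,
      Set.singleton_subset_iff]
    exact ⟨hu1, hu2, hu3, hu4⟩
  have hcard : ({u1, u2, u3, u4} : Set (MapBn 2)).ncard = 4 := by
    rw [Set.ncard_insert_of_notMem (by
        simp only [Set.mem_insert_iff, Set.mem_singleton_iff]
        push_neg
        exact ⟨ne12, ne13, ne14⟩),
      Set.ncard_insert_of_notMem (by
        simp only [Set.mem_insert_iff, Set.mem_singleton_iff]
        push_neg
        exact ⟨ne23, ne24⟩),
      Set.ncard_insert_of_notMem (by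
        simp only [Set.mem_singleton_iff]
        exact ne34),
      Set.ncard_singleton]
  calc 4 = ({u1, u2, u3, u4} : Set (MapBn 2)).ncard := hcard.symm
    _ ≤ U.ncard := Set.ncard_le_ncard hsub U.toFinite

lemma fin2 : ∀ i : Fin 2, i = 0 ∨ i = 1 := by decide
lemma bn2cases : ∀ c : Bn 2, c = none ∨ ∃ x y : Fin 2, c = some (x, y) := by
  rintro (_ | ⟨x, y⟩)
  · exact Or.inl rfl
  · exact Or.inr ⟨x, y, rfl⟩

lemma mem_cl_of_eq {T : Subsemigroup (MapBn 2)} {x y : MapBn 2} (h : x ∈ T) (e : x = y) :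
    y ∈ T := e ▸ h

lemma gen : APlus 2 ⊆ (Subsemigroup.closure {nSuppMap 2 0 1 (Equiv.swap 0 1), nSuppMap 2 1 0 1,
    constMap 2 (some (0, 0)), sglMap 2 0 0 0 0} : Set (MapBn 2)) := by
  set cl := Subsemigroup.closure {nSuppMap 2 0 1 (Equiv.swap 0 1), nSuppMap 2 1 0 1,
    constMap 2 (some (0, 0)), sglMap 2 0 0 0 0} with hcl
  have h01t : nSuppMap 2 0 1 (pb true) ∈ cl :=
    mem_cl_of_eq (Subsemigroup.subset_closure (Set.mem_insert _ _)) (by decide)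
  have h10f : nSuppMap 2 1 0 (pb false) ∈ cl :=
    mem_cl_of_eq (Subsemigroup.subset_closure
      (Set.mem_insert_of_mem _ (Set.mem_insert _ _))) (by decide)
  have hc : constMap 2 (some (0, 0)) ∈ cl :=
    Subsemigroup.subset_closure
      (Set.mem_insert_of_mem _ (Set.mem_insert_of_mem _ (Set.mem_insert _ _)))
  have hd : sglMap 2 0 0 0 0 ∈ cl :=
    Subsemigroup.subset_closure
      (Set.mem_insert_of_mem _ (Set.mem_insert_of_mem _ (Set.mem_insert_of_mem _ rfl)))
  have h00t : nSuppMap 2 0 0 (pb true) ∈ cl := mem_cl_of_eq (mul_mem h01t h10f) (by decide)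
  have h01f : nSuppMap 2 0 1 (pb false) ∈ cl := mem_cl_of_eq (mul_mem h00t h01t) (by decide)
  have h00f : nSuppMap 2 0 0 (pb false) ∈ cl := mem_cl_of_eq (mul_mem h01f h10f) (by decide)
  have h11t : nSuppMap 2 1 1 (pb true) ∈ cl := mem_cl_of_eq (mul_mem h10f h01t) (by decide)
  have h10t : nSuppMap 2 1 0 (pb true) ∈ cl := mem_cl_of_eq (mul_mem h11t h10f) (by decide)
  have h11f : nSuppMap 2 1 1 (pb false) ∈ cl := mem_cl_of_eq (mul_mem h10t h01t) (by decide)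
  have hns : ∀ (p q : Fin 2) (b : Bool), nSuppMap 2 p q (pb b) ∈ cl := by
    intro p q b
    rcases fin2 p with rfl | rfl <;> rcases fin2 q with rfl | rfl <;> cases b <;> assumption
  have hcs : ∀ x y : Fin 2, constMap 2 (some (x, y)) ∈ cl := fun x y =>
    mem_cl_of_eq (mul_mem hc (hns 0 y (decide (x = 1))))
      (by revert x y; decide)
  have hcn : constMap 2 (none : Bn 2) ∈ cl :=
    mem_cl_of_eq (mul_mem hc (hns 1 0 false)) (by decide)
  have hsgl : ∀ k l p q : Fin 2, sglMap 2 k l p q ∈ cl := fun k l p q =>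
    mem_cl_of_eq (mul_mem (mul_mem (hns l 0 (decide (k = 1))) hd) (hns 0 q (decide (p = 1))))
      (by revert k l p q; decide)
  intro f hf
  rcases hf with ⟨c, rfl⟩ | ⟨p, q, σ, rfl⟩ | ⟨k, l, p, q, rfl⟩
  · rcases bn2cases c with rfl | ⟨x, y, rfl⟩
    · exact hcn
    · exact hcs x y
  · rcases perm2 σ with rfl | rfl
    · exact hns p q false
    · exact hns p q true
  · exact hsgl k l p q

theorem lower_rank_APlus_two :
    let Q : Set (MapBn 2) := {nSuppMap 2 0 1 (Equiv.swap 0 1), nSuppMap 2 1 0 1,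
      constMap 2 (some (0, 0)), sglMap 2 0 0 0 0}
    (Subsemigroup.closure Q : Set (MapBn 2)) = APlus 2 ∧ Q.ncard = 4 ∧
    sInf {k | ∃ U : Set (MapBn 2), U ⊆ APlus 2 ∧ U.ncard = k ∧
      (Subsemigroup.closure U : Set (MapBn 2)) = APlus 2} = 4 := by
  intro Q
  have hQsub : ({nSuppMap 2 0 1 (Equiv.swap 0 1), nSuppMap 2 1 0 1,
      constMap 2 (some (0, 0)), sglMap 2 0 0 0 0} : Set (MapBn 2)) ⊆ APlus 2 := by
    intro f hf
    simp only [Set.mem_insert_iff, Set.mem_singleton_iff] at hf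
    rcases hf with rfl | rfl | rfl | rfl
    · exact Or.inr (Or.inl ⟨_, _, _, rfl⟩)
    · exact Or.inr (Or.inl ⟨_, _, _, rfl⟩)
    · exact Or.inl ⟨_, rfl⟩
    · exact Or.inr (Or.inr ⟨_, _, _, _, rfl⟩)
  have part1 : (Subsemigroup.closure ({nSuppMap 2 0 1 (Equiv.swap 0 1), nSuppMap 2 1 0 1,
      constMap 2 (some (0, 0)), sglMap 2 0 0 0 0} : Set (MapBn 2)) : Set (MapBn 2)) = APlus 2 := by
    refine Set.Subset.antisymm ?_ gen
    intro x hx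
    exact (Subsemigroup.closure_le (S := APlusSub)).mpr hQsub hx
  have part2 : ({nSuppMap 2 0 1 (Equiv.swap 0 1), nSuppMap 2 1 0 1,
      constMap 2 (some (0, 0)), sglMap 2 0 0 0 0} : Set (MapBn 2)).ncard = 4 := by
    rw [Set.ncard_insert_of_notMem (by
        simp only [Set.mem_insert_iff, Set.mem_singleton_iff]; decide),
      Set.ncard_insert_of_notMem (by
        simp only [Set.mem_insert_iff, Set.mem_singleton_iff]; decide),
      Set.ncard_insert_of_notMem (by
        simp only [Set.mem_singleton_iff]; decide),
      Set.ncard_singleton]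
  have h4 : 4 ∈ {k | ∃ U : Set (MapBn 2), U ⊆ APlus 2 ∧ U.ncard = k ∧
      (Subsemigroup.closure U : Set (MapBn 2)) = APlus 2} :=
    ⟨_, hQsub, part2, part1⟩
  have part3 : sInf {k | ∃ U : Set (MapBn 2), U ⊆ APlus 2 ∧ U.ncard = k ∧
      (Subsemigroup.closure U : Set (MapBn 2)) = APlus 2} = 4 := by
    refine le_antisymm (Nat.sInf_le h4) (le_csInf ⟨4, h4⟩ ?_)
    rintro k ⟨U, hU, rfl, hclU⟩
    exact lower hU hclU
  exact ⟨part1, part2, part3⟩
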